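/- Let Γ ≤ Aut(LP(A,b,c)) be a finite group of automorphisms of a linear program, let E be a matrix whose kernel is Fix_Γ(R^n), and let (A'|b') be obtained from (A|b) by summing the rows within each Γ-orbit (Γ acting on rows via γ ↦ right multiplication by γ^{-t} on A and correspondingly on b). Then the polyhedron P' = {x : A'x ≤ b', Ex = 0} equals Fix_Γ(P(A,b)), the set of feasible points fixed by every element of Γ; moreover P' = {β(Γx) : x ∈ P(A,b)}. -/

import Mathlib

open Matrix

private lemma mulVec_sum_aux {ι R k l : Type*} [NonUnitalNonAssocSemiring R] [Fintype l]
    (s : Finset ι) (M : Matrix k l R) (f : ι → l → R) :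
    M.mulVec (∑ i ∈ s, f i) = ∑ i ∈ s, M.mulVec (f i) := by
  ext j
  simp only [Matrix.mulVec, dotProduct, Finset.sum_apply, Finset.mul_sum]
  rw [Finset.sum_comm]

/-- Let `Γ ≤ Aut(LP(A,b,c))` be a finite group of automorphisms of a linear
program which permutes the rows of `(A|b)` (via `π`), let `E` be a matrix whose
kernel is the fixed space `Fix_Γ(ℝⁿ)`, and let the system `A'x ≤ b'` be
obtained by summing the rows of `(A|b)` within each `Γ`-orbit.  Then the
polyhedron `P' = {x | A'x ≤ b', Ex = 0}` equals `Fix_Γ(P(A,b))`, the set of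
feasible points fixed by every element of `Γ`; moreover `P'` is the image of
`P(A,b)` under the orbit-barycenter map `x ↦ β(Γx)`. -/
theorem reduced_polyhedron_is_fixed_feasible_set
    (m n p : ℕ) (A : Matrix (Fin m) (Fin n) ℝ) (b : Fin m → ℝ) (c : Fin n → ℝ)
    (P : Set (Fin n → ℝ)) (hP : P = {x | A.mulVec x ≤ b})
    (Γ : Subgroup (GL (Fin n) ℝ)) [Fintype Γ]
    (hfeas : ∀ γ ∈ Γ, (fun x => γ.val.mulVec x) '' P = P)
    (hobj : ∀ γ ∈ Γ, ∀ x ∈ P, c ⬝ᵥ γ.val.mulVec x = c ⬝ᵥ x)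
    (π : Γ →* Equiv.Perm (Fin m))
    (hπA : ∀ (γ : Γ) (i : Fin m) (x : Fin n → ℝ),
        A (π γ i) ⬝ᵥ x = A i ⬝ᵥ (γ⁻¹ : Γ).val.val.mulVec x)
    (hπb : ∀ (γ : Γ) (i : Fin m), b (π γ i) = b i)
    (E : Matrix (Fin p) (Fin n) ℝ)
    (hE : ∀ x : Fin n → ℝ, E.mulVec x = 0 ↔ ∀ γ ∈ Γ, γ.val.mulVec x = x)
    (P' : Set (Fin n → ℝ))
    (hP' : P' = {x | (∀ i : Fin m,
        (∑ j ∈ Finset.image (fun γ : Γ => π γ i) Finset.univ, A j ⬝ᵥ x)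
          ≤ ∑ j ∈ Finset.image (fun γ : Γ => π γ i) Finset.univ, b j) ∧
        E.mulVec x = 0}) :
    P' = {x ∈ P | ∀ γ ∈ Γ, γ.val.mulVec x = x} ∧
    P' = (fun x => (Fintype.card Γ : ℝ)⁻¹ •
        ∑ γ : Γ, (γ : GL (Fin n) ℝ).val.mulVec x) '' P := by
  classical
  have hcardΓ : (0:ℝ) < (Fintype.card Γ : ℝ) := by
    exact_mod_cast Fintype.card_pos
  -- first part
  have key1 : P' = {x ∈ P | ∀ γ ∈ Γ, γ.val.mulVec x = x} := by
    subst hP hP'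
    ext x
    simp only [Set.mem_setOf_eq, Set.mem_sep_iff]
    constructor
    · rintro ⟨hineq, hfix0⟩
      have hfix := (hE x).mp hfix0
      refine ⟨fun i => ?_, hfix⟩
      have hxfix : ∀ γ : Γ, (γ : GL (Fin n) ℝ).val.mulVec x = x :=
        fun γ => hfix γ.val γ.property
      have hmem : i ∈ Finset.image (fun γ : Γ => π γ i) Finset.univ := by
        refine Finset.mem_image.mpr ⟨1, Finset.mem_univ _, ?_⟩
        simp
      set s := Finset.image (fun γ : Γ => π γ i) Finset.univ with hs
      have hA : ∀ j ∈ s, A j ⬝ᵥ x = A i ⬝ᵥ x := by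
        intro j hj
        rcases Finset.mem_image.mp hj with ⟨γ, -, rfl⟩
        rw [hπA γ i x, hxfix γ⁻¹]
      have hb : ∀ j ∈ s, b j = b i := by
        intro j hj
        rcases Finset.mem_image.mp hj with ⟨γ, -, rfl⟩
        exact hπb γ i
      have h1 : ∑ j ∈ s, A j ⬝ᵥ x = (s.card : ℝ) * (A i ⬝ᵥ x) := by
        rw [Finset.sum_congr rfl hA, Finset.sum_const, nsmul_eq_mul]
      have h2 : ∑ j ∈ s, b j = (s.card : ℝ) * b i := by
        rw [Finset.sum_congr rfl hb, Finset.sum_const, nsmul_eq_mul]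
      have hcard : (0:ℝ) < (s.card : ℝ) := by
        exact_mod_cast Finset.card_pos.mpr ⟨i, hmem⟩
      have := hineq i
      rw [h1, h2] at this
      exact le_of_mul_le_mul_left this hcard
    · rintro ⟨hxP, hfix⟩
      refine ⟨fun i => Finset.sum_le_sum fun j _ => hxP j, (hE x).mpr hfix⟩
  refine ⟨key1, ?_⟩
  rw [key1]
  ext y
  constructor
  · rintro ⟨hyP, hfix⟩
    refine ⟨y, hyP, ?_⟩
    have : ∑ γ : Γ, (γ : GL (Fin n) ℝ).val.mulVec y = (Fintype.card Γ : ℝ) • y := by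
      rw [Finset.sum_congr rfl fun γ _ => hfix γ.val γ.property]
      simp [Finset.sum_const, ← Nat.cast_smul_eq_nsmul ℝ]
    show (Fintype.card Γ : ℝ)⁻¹ • ∑ γ : Γ, (γ : GL (Fin n) ℝ).val.mulVec y = y
    rw [this, smul_smul, inv_mul_cancel₀ (ne_of_gt hcardΓ), one_smul]
  · rintro ⟨x, hxP, rfl⟩
    have hmemγ : ∀ γ : Γ, (γ : GL (Fin n) ℝ).val.mulVec x ∈ P := by
      intro γ
      rw [← hfeas γ.val γ.property]
      exact ⟨x, hxP, rfl⟩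
    constructor
    · -- barycenter in P
      rw [hP]
      intro i
      have : A.mulVec ((Fintype.card Γ : ℝ)⁻¹ • ∑ γ : Γ, (γ : GL (Fin n) ℝ).val.mulVec x)
          = (Fintype.card Γ : ℝ)⁻¹ • ∑ γ : Γ, A.mulVec ((γ : GL (Fin n) ℝ).val.mulVec x) := by
        rw [Matrix.mulVec_smul, mulVec_sum_aux]
      rw [this]
      have hle : ∀ γ : Γ, (A.mulVec ((γ : GL (Fin n) ℝ).val.mulVec x)) i ≤ b i := by
        intro γ
        have := hmemγ γ
        rw [hP] at this
        exact this i
      calc ((Fintype.card Γ : ℝ)⁻¹ • ∑ γ : Γ, A.mulVec ((γ : GL (Fin n) ℝ).val.mulVec x)) i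
          = (Fintype.card Γ : ℝ)⁻¹ * ∑ γ : Γ, (A.mulVec ((γ : GL (Fin n) ℝ).val.mulVec x)) i := by
            simp [Finset.sum_apply]
        _ ≤ (Fintype.card Γ : ℝ)⁻¹ * ((Fintype.card Γ : ℝ) * b i) := by
            apply mul_le_mul_of_nonneg_left _ (le_of_lt (inv_pos.mpr hcardΓ))
            calc ∑ γ : Γ, (A.mulVec ((γ : GL (Fin n) ℝ).val.mulVec x)) i
                ≤ ∑ _γ : Γ, b i := Finset.sum_le_sum fun γ _ => hle γ
              _ = (Fintype.card Γ : ℝ) * b i := by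
                  simp [Finset.sum_const, nsmul_eq_mul]
        _ = b i := by
            rw [← mul_assoc, inv_mul_cancel₀ (ne_of_gt hcardΓ), one_mul]
    · intro γ0 hγ0
      set g : Γ := ⟨γ0, hγ0⟩ with hg
      show (g : GL (Fin n) ℝ).val.mulVec _ = _
      rw [Matrix.mulVec_smul]
      congr 1
      rw [mulVec_sum_aux]
      refine Fintype.sum_equiv (Equiv.mulLeft g) _ _ fun δ => ?_
      simp only [Equiv.coe_mulLeft]
      rw [Matrix.mulVec_mulVec]
      norm_cast
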